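/- The query translation into PDDL preconditions preserves satisfaction: for every DAW-net state (M, η) and every guard Φ of the guard language, the data model with assignment η satisfies Φ if and only if the planning state Ψ(M, η) satisfies the translated precondition formula trans(Φ), where Ψ maps each defined variable v to η(v), each undefined variable to null, each marked place to true and each unmarked place to false. -/
import Mathlib


/-- Terms of the guard language: variables or constants. -/
inductive GTerm (V O : Type) where
  | var (v : V)
  | const (o : O)

/-- Guards of the DAW-net guard language. -/
inductive Guard (V O : Type) where
  | tru
  | defd (v : V)
  | eq (v : V) (t : GTerm V O)
  | le (t1 t2 : GTerm V O)
  | not (g : Guard V O)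
  | and (g1 g2 : Guard V O)

/-- Evaluation of a term under a (partial) assignment. -/
def evalT {V O : Type} (η : V → Option O) : GTerm V O → Option O
  | .var v => η v
  | .const o => some o

/-- DAW-net semantics of guards over a partial assignment `η`, with `rel` the partial
order on the domains. -/
def gsat {V O : Type} (rel : O → O → Prop) (η : V → Option O) : Guard V O → Prop
  | .tru => True
  | .defd v => (η v).isSome
  | .eq v t => ∃ o, η v = some o ∧ evalT η t = some o
  | .le t1 t2 => ∃ o1 o2, evalT η t1 = some o1 ∧ evalT η t2 = some o2 ∧ rel o1 o2
  | .not g => ¬ gsat rel η g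
  | .and g1 g2 => gsat rel η g1 ∧ gsat rel η g2

/-- PDDL precondition formulas produced by the translation (with `null` represented by
`none` in planning states). -/
inductive PForm (V O : Type) where
  | tru
  | eqNull (v : V)
  | eqAtom (v : V) (t : GTerm V O)
  | ordAtom (t1 t2 : GTerm V O)
  | not (f : PForm V O)
  | and (f1 f2 : PForm V O)

/-- The translation of guards into PDDL preconditions. -/
def transG {V O : Type} : Guard V O → PForm V O
  | .tru => .tru
  | .defd v => .not (.eqNull v)
  | .eq v t => .and (.not (.eqNull v)) (.eqAtom v t)
  | .le t1 t2 => .ordAtom t1 t2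
  | .not g => .not (transG g)
  | .and g1 g2 => .and (transG g1) (transG g2)

/-- Satisfaction of PDDL precondition formulas in a planning state (the variable part of
a planning state is a total map into the domain extended with `null = none`; the atom
`ord(t1,t2)` holds iff the values are related by the rigid order relation). -/
def psat {V O : Type} (rel : O → O → Prop) (s : V → Option O) : PForm V O → Prop
  | .tru => True
  | .eqNull v => s v = none
  | .eqAtom v t => s v = evalT s t
  | .ordAtom t1 t2 => ∃ o1 o2, evalT s t1 = some o1 ∧ evalT s t2 = some o2 ∧ rel o1 o2
  | .not f => ¬ psat rel s f
  | .and f1 f2 => psat rel s f1 ∧ psat rel s f2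

/-- The variable part of `Ψ(M, η)` : each defined variable is mapped to its value and
each undefined variable to `null` (here `none`). -/
def PsiVar {V O : Type} (η : V → Option O) : V → Option O := η

/-- The query translation into PDDL preconditions preserves satisfaction: for every
DAW-net state `(M, η)` and guard `Φ`, `D, η ⊨ Φ` iff the planning state `Ψ(M, η)`
satisfies the translated precondition `trans(Φ)`. -/
theorem query_translation_preserves_satisfaction {P V O : Type}
    (rel : O → O → Prop) (M : P → ℕ) (η : V → Option O) (g : Guard V O) :
    gsat rel η g ↔ psat rel (PsiVar η) (transG g) := by
  induction g with
  | tru => simp [gsat, transG, psat]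
  | defd v => simp [gsat, transG, psat, PsiVar, Option.isSome_iff_ne_none]
  | eq v t =>
    simp only [gsat, transG, psat, PsiVar]
    constructor
    · rintro ⟨o, h1, h2⟩
      exact ⟨by simp [h1], by rw [h1, h2]⟩
    · rintro ⟨h1, h2⟩
      obtain ⟨o, ho⟩ := Option.ne_none_iff_exists'.mp h1
      exact ⟨o, ho, by rw [← h2, ho]⟩
  | le t1 t2 => simp [gsat, transG, psat, PsiVar]
  | not g ih => simp [gsat, transG, psat, ih]
  | and g1 g2 ih1 ih2 => simp [gsat, transG, psat, ih1, ih2]
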